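/- Let F be holomorphic on Δ⁺ with a continuous extension to Δ⁺ ∪ γ, suppose there exists C > 0 such that |Im F(t)| ≤ C·|Re F(t)| for every t ∈ γ, and suppose F vanishes to infinite order at 0. Assume further that there exist a constant K > 0, an open simply connected set B̂ ⊆ Δ⁺ with 0 ∈ ∂B̂, an exponent α > 0, and a map Ψ from the closure of Δ⁺ onto the closure of B̂ that is a homeomorphism, is Hölder continuous of exponent α, restricts to a biholomorphism from Δ⁺ onto B̂, and satisfies Ψ(0) = 0, such that |Im F(p)| ≤ K·|Re F(p)| for all p ∈ B̂. Then F is identically zero on Δ⁺. -/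

import Mathlib

/-- The open upper half disc `Δ⁺ = {ζ ∈ ℂ : |ζ| < 1, Im ζ > 0}`. -/
def upperHalfDisc : Set ℂ := {z : ℂ | ‖z‖ < 1 ∧ 0 < z.im}

/-- The interval `γ = (-1,1)` viewed as a subset of the real axis in `ℂ`. -/
def realSegment : Set ℂ := {z : ℂ | z.im = 0 ∧ -1 < z.re ∧ z.re < 1}

lemma isOpen_upperHalfDisc : IsOpen upperHalfDisc := by
  have h : upperHalfDisc = {z : ℂ | ‖z‖ < 1} ∩ {z : ℂ | 0 < z.im} := rfl
  rw [h]
  exact (isOpen_lt continuous_norm continuous_const).inter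
    (isOpen_lt continuous_const Complex.continuous_im)

lemma convex_upperHalfDisc : Convex ℝ upperHalfDisc := by
  have h : upperHalfDisc = Metric.ball (0:ℂ) 1 ∩ {z : ℂ | 0 < z.im} := by
    ext z
    simp [upperHalfDisc, Metric.mem_ball, Complex.dist_eq]
  rw [h]
  exact (convex_ball 0 1).inter (convex_halfSpace_im_gt 0)

lemma isPreconnected_upperHalfDisc : IsPreconnected upperHalfDisc :=
  convex_upperHalfDisc.isPreconnected

lemma ne_zero_of_mem_upperHalfDisc {z : ℂ} (hz : z ∈ upperHalfDisc) : z ≠ 0 := by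
  intro h
  rw [h] at hz
  exact lt_irrefl 0 (by simpa using hz.2)

/-- Core Phragmén–Lindelöf argument: a holomorphic function `G` on the upper half disc whose
real part is everywhere positive, whose values lie in the cone `|Im| ≤ K |Re|`, and which
decays quadratically at `0`, yields a contradiction. -/
lemma auxPL (K A ρ : ℝ) (hK : 0 ≤ K) (hA : 0 < A) (hρ0 : 0 < ρ) (hρ1 : ρ ≤ 1)
    (G : ℂ → ℂ) (hGd : DifferentiableOn ℂ G upperHalfDisc)
    (hpos : ∀ z ∈ upperHalfDisc, 0 < (G z).re)
    (hconeG : ∀ z ∈ upperHalfDisc, |(G z).im| ≤ K * |(G z).re|)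
    (hbound : ∀ z ∈ upperHalfDisc, ‖z‖ < ρ →
      ‖G z‖ ≤ A * ‖z‖ ^ 2) :
    False := by
  set M : ℝ := Real.sqrt (1 + K ^ 2) with hMdef
  have hMsq : M ^ 2 = 1 + K ^ 2 := Real.sq_sqrt (by positivity)
  have hM0 : 0 ≤ M := Real.sqrt_nonneg _
  have hM1 : 1 ≤ M := by nlinarith [sq_nonneg (M - 1), sq_nonneg K]
  -- |G z| ≤ M * Re (G z)
  have habs : ∀ z ∈ upperHalfDisc, ‖G z‖ ≤ M * (G z).re := by
    intro z hz
    have h1 := hconeG z hz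
    have h2 := hpos z hz
    have h3 : (‖G z‖) ^ 2 ≤ (M * (G z).re) ^ 2 := by
      rw [Complex.sq_norm, Complex.normSq_apply, mul_pow, hMsq]
      have him : (G z).im ^ 2 ≤ K ^ 2 * (G z).re ^ 2 := by
        have e1 : |(G z).im| ^ 2 = (G z).im ^ 2 := sq_abs _
        have e2 : |(G z).re| ^ 2 = (G z).re ^ 2 := sq_abs _
        nlinarith [abs_nonneg ((G z).im), abs_nonneg ((G z).re),
          mul_self_le_mul_self (abs_nonneg ((G z).im)) h1]
      nlinarith
    exact le_of_pow_le_pow_left₀ two_ne_zero (by positivity) h3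
  have hne : ∀ z ∈ upperHalfDisc, G z ≠ 0 := by
    intro z hz h
    have := hpos z hz
    rw [h] at this
    simp at this
  -- the auxiliary bounded function `H`
  set H : ℂ → ℂ := fun z => Complex.exp (-(G z)⁻¹) with hHdef
  set b : ℝ := (M * A)⁻¹ with hbdef
  have hb : 0 < b := by positivity
  have hinv1 : ∀ z ∈ upperHalfDisc, 0 ≤ ((G z)⁻¹).re := by
    intro z hz
    rw [Complex.inv_re]
    exact div_nonneg (hpos z hz).le (Complex.normSq_nonneg _)
  have hinv2 : ∀ z ∈ upperHalfDisc, ‖z‖ < ρ →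
      b / ‖z‖ ^ 2 ≤ ((G z)⁻¹).re := by
    intro z hz hzρ
    have hGpos : 0 < ‖G z‖ := norm_pos_iff.2 (hne z hz)
    have ht0 : 0 < ‖z‖ := norm_pos_iff.2 (ne_zero_of_mem_upperHalfDisc hz)
    have h5 := hbound z hz hzρ
    have h6 := habs z hz
    have h2 := hpos z hz
    rw [Complex.inv_re, Complex.normSq_eq_norm_sq, hbdef]
    rw [div_le_div_iff₀ (by positivity) (by positivity)]
    have hAt : 0 < A * ‖z‖ ^ 2 := by positivity
    have hMA : 0 < M * A := by positivity
    have key : ‖G z‖ ^ 2 ≤ M * A * ((G z).re * ‖z‖ ^ 2) := by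
      nlinarith [mul_le_mul h5 h6 hGpos.le hAt.le]
    rw [inv_mul_le_iff₀ hMA]
    linarith [key]
  have hH1 : ∀ z ∈ upperHalfDisc, ‖H z‖ ≤ 1 := by
    intro z hz
    rw [hHdef]
    simp only [Complex.norm_exp, Complex.neg_re]
    rw [Real.exp_le_one_iff]
    linarith [hinv1 z hz]
  have hH2 : ∀ z ∈ upperHalfDisc, ‖z‖ < ρ →
      ‖H z‖ ≤ Real.exp (-(b / ‖z‖ ^ 2)) := by
    intro z hz hzρ
    rw [hHdef]
    simp only [Complex.norm_exp, Complex.neg_re]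
    exact Real.exp_le_exp.2 (by linarith [hinv2 z hz hzρ])
  have hHd : DifferentiableOn ℂ H upperHalfDisc := ((hGd.inv hne).neg).cexp
  -- the conformal change of variable
  set R : ℝ := 2 / ρ with hRdef
  have hR2 : 2 ≤ R := by
    rw [hRdef]
    calc (2:ℝ) = 2 / 1 := by norm_num
    _ ≤ 2 / ρ := by
        apply div_le_div_of_nonneg_left (by norm_num) hρ0 hρ1
  have hR0 : 0 < R := by linarith
  have hRρ : R⁻¹ < ρ := by
    rw [hRdef]
    rw [inv_div]
    linarith [half_lt_self hρ0]
  set m : ℂ → ℂ := fun ζ => Complex.I / (ζ + (R : ℂ)) with hmdef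
  have hm : ∀ ζ : ℂ, 0 ≤ ζ.re →
      (ζ + (R:ℂ)) ≠ 0 ∧ m ζ ∈ upperHalfDisc ∧ ‖m ζ‖ ≤ (ζ.re + R)⁻¹
        ∧ ‖m ζ‖ < ρ := by
    intro ζ hζ
    have hwre : 0 < (ζ + (R:ℂ)).re := by
      simp only [Complex.add_re, Complex.ofReal_re]
      linarith
    have hw0 : (ζ + (R:ℂ)) ≠ 0 := by
      intro h
      rw [h] at hwre
      simp at hwre
    have hre_eq : (ζ + (R:ℂ)).re = ζ.re + R := by
      simp [Complex.add_re, Complex.ofReal_re]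
    have habsw : ζ.re + R ≤ ‖ζ + (R:ℂ)‖ := by
      rw [← hre_eq]
      exact Complex.re_le_norm _
    have habsm : ‖m ζ‖ = (‖ζ + (R:ℂ)‖)⁻¹ := by
      rw [hmdef]
      simp [norm_div, Complex.norm_I]
    have h1 : ‖m ζ‖ ≤ (ζ.re + R)⁻¹ := by
      rw [habsm]
      exact inv_anti₀ (by linarith) habsw
    have h2 : (ζ.re + R)⁻¹ ≤ R⁻¹ := inv_anti₀ hR0 (by linarith)
    have hsmall : ‖m ζ‖ < ρ := lt_of_le_of_lt (h1.trans h2) hRρ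
    have him : 0 < (m ζ).im := by
      have himeq : (m ζ).im = (ζ + (R:ℂ)).re / Complex.normSq (ζ + (R:ℂ)) := by
        rw [hmdef]
        simp [Complex.div_im, Complex.I_re, Complex.I_im]
      rw [himeq]
      exact div_pos hwre (Complex.normSq_pos.2 hw0)
    exact ⟨hw0, ⟨lt_of_lt_of_le hsmall hρ1, him⟩, h1, hsmall⟩
  set f : ℂ → ℂ := fun ζ => H (m ζ) with hfdef
  have hfd : ∀ ζ : ℂ, 0 ≤ ζ.re → DifferentiableAt ℂ f ζ := by
    intro ζ hζ
    obtain ⟨hw0, hmem, -, -⟩ := hm ζ hζ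
    have hdm : DifferentiableAt ℂ m ζ :=
      (differentiableAt_const _).div (differentiableAt_id.add (differentiableAt_const _)) hw0
    have hdH : DifferentiableAt ℂ H (m ζ) :=
      hHd.differentiableAt (isOpen_upperHalfDisc.mem_nhds hmem)
    exact hdH.comp ζ hdm
  have hd : DiffContOnCl ℂ f {z : ℂ | 0 < z.re} := by
    constructor
    · exact fun ζ hζ => (hfd ζ (le_of_lt hζ)).differentiableWithinAt
    · rw [Complex.closure_setOf_lt_re]
      exact fun ζ hζ => (hfd ζ hζ).continuousAt.continuousWithinAt
  have hexp : ∃ cc < (2:ℝ), ∃ B, f =O[Bornology.cobounded ℂ ⊓ Filter.principal {z : ℂ | 0 < z.re}]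
      fun z => Real.exp (B * ‖z‖ ^ cc) := by
    refine ⟨1, one_lt_two, 0, Asymptotics.IsBigO.of_bound 1 ?_⟩
    refine Filter.Eventually.filter_mono inf_le_right ?_
    rw [Filter.eventually_principal]
    intro ζ hζ
    obtain ⟨-, hmem, -, -⟩ := hm ζ (le_of_lt hζ)
    simp only [zero_mul, Real.exp_zero, norm_one, mul_one]
    exact hH1 _ hmem
  have hfbound : ∀ x : ℝ, 0 ≤ x → ‖f (x : ℂ)‖ ≤ Real.exp (-(b * (x + R) ^ 2)) := by
    intro x hx
    obtain ⟨-, hmem, hle, hsmall⟩ := hm (x : ℂ) (by simpa using hx)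
    set t := ‖m (x : ℂ)‖ with htdef
    have ht0 : 0 < t := norm_pos_iff.2 (ne_zero_of_mem_upperHalfDisc hmem)
    have hs0 : 0 < x + R := by linarith
    have hle' : t ≤ (x + R)⁻¹ := by simpa using hle
    have hts : t * (x + R) ≤ 1 := by
      calc t * (x + R) ≤ (x + R)⁻¹ * (x + R) := by
            exact mul_le_mul_of_nonneg_right hle' hs0.le
      _ = 1 := inv_mul_cancel₀ hs0.ne'
    have hkey : b * (x + R) ^ 2 ≤ b / t ^ 2 := by
      rw [le_div_iff₀ (by positivity)]
      have h2 : (t * (x + R)) ^ 2 ≤ 1 := by nlinarith [mul_nonneg ht0.le hs0.le]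
      have e : b * (x + R) ^ 2 * t ^ 2 = b * (t * (x + R)) ^ 2 := by ring
      rw [e]
      calc b * (t * (x + R)) ^ 2 ≤ b * 1 := mul_le_mul_of_nonneg_left h2 hb.le
      _ = b := mul_one b
    calc ‖f (x : ℂ)‖ = ‖H (m (x : ℂ))‖ := rfl
    _ ≤ Real.exp (-(b / t ^ 2)) := hH2 _ hmem hsmall
    _ ≤ Real.exp (-(b * (x + R) ^ 2)) := Real.exp_le_exp.2 (by linarith)
  have hre : Asymptotics.SuperpolynomialDecay Filter.atTop Real.exp fun x : ℝ => ‖f (x : ℂ)‖ := by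
    intro n
    apply squeeze_zero' (g := fun x : ℝ => Real.exp ((n : ℝ) * x - b * (x + R) ^ 2))
    · exact Filter.Eventually.of_forall fun x => by positivity
    · filter_upwards [Filter.eventually_ge_atTop (0 : ℝ)] with x hx
      have h1 : ‖f (x : ℂ)‖ ≤ Real.exp (-(b * (x + R) ^ 2)) := hfbound x hx
      calc Real.exp x ^ n * ‖f (x : ℂ)‖
          ≤ Real.exp x ^ n * Real.exp (-(b * (x + R) ^ 2)) := by
            exact mul_le_mul_of_nonneg_left h1 (by positivity)
      _ = Real.exp ((n : ℝ) * x - b * (x + R) ^ 2) := by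
            rw [← Real.exp_nat_mul, ← Real.exp_add]
            ring_nf
    · apply Real.tendsto_exp_atBot.comp
      refine Filter.tendsto_atBot_mono' Filter.atTop ?_ Filter.tendsto_neg_atTop_atBot
      · filter_upwards [Filter.eventually_ge_atTop (max 1 (((n : ℝ) + 1) / b))] with x hx
        have hx1 : 1 ≤ x := le_trans (le_max_left _ _) hx
        have hx2 : ((n : ℝ) + 1) / b ≤ x := le_trans (le_max_right _ _) hx
        have h3 : (n : ℝ) + 1 ≤ b * x := by
          rw [div_le_iff₀ hb] at hx2
          linarith [hx2]
        have h4 : ((n : ℝ) + 1) * x ≤ b * x * x :=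
          mul_le_mul_of_nonneg_right h3 (by linarith)
        nlinarith [mul_nonneg hb.le (sq_nonneg R), mul_nonneg (mul_nonneg hb.le hR0.le)
          (by linarith : (0:ℝ) ≤ x)]
  have him : ∃ Cb : ℝ, ∀ x : ℝ, ‖f ((x : ℂ) * Complex.I)‖ ≤ Cb := by
    refine ⟨1, fun x => ?_⟩
    have hre0 : ((x : ℂ) * Complex.I).re = 0 := by simp
    obtain ⟨-, hmem, -, -⟩ := hm ((x : ℂ) * Complex.I) (by rw [hre0])
    exact hH1 _ hmem
  have hzero := PhragmenLindelof.eq_zero_on_right_half_plane_of_superexponential_decay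
    hd hexp hre him (show (0:ℂ) ∈ {z : ℂ | 0 ≤ z.re} by simp)
  have : H (m 0) = 0 := hzero
  rw [hHdef] at this
  exact Complex.exp_ne_zero _ this

/-- **Lemma 2.4.**  If `F` is holomorphic on `Δ⁺`, continuous on `Δ⁺ ∪ γ`, maps `γ` into a cone
`{|Im z| ≤ C|Re z|}`, vanishes to infinite order at `0`, and moreover there are a constant
`K > 0` and an open simply connected `B̂ ⊆ Δ⁺` with `0 ∈ ∂B̂`, together with an `α`-Hölder
homeomorphism `Ψ` of `closure Δ⁺` onto `closure B̂` restricting to a biholomorphism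
`Δ⁺ → B̂` with `Ψ(0) = 0`, such that `|Im F| ≤ K |Re F|` on `B̂`, then `F ≡ 0` on `Δ⁺`. -/
theorem cone_condition_on_subdomain_implies_vanishing
    (F : ℂ → ℂ)
    (hF_hol : DifferentiableOn ℂ F upperHalfDisc)
    (hF_cont : ContinuousOn F (upperHalfDisc ∪ realSegment))
    (C : ℝ) (hC : 0 < C)
    (hcone : ∀ t ∈ realSegment, |(F t).im| ≤ C * |(F t).re|)
    (hvanish : ∀ k : ℕ, ∃ Ck > (0 : ℝ), ∃ δ > (0 : ℝ),
      ∀ z ∈ upperHalfDisc, ‖z‖ < δ →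
        ‖F z‖ ≤ Ck * ‖z‖ ^ k)
    (K : ℝ) (hK : 0 < K)
    (Bhat : Set ℂ) (hB_sub : Bhat ⊆ upperHalfDisc) (hB_open : IsOpen Bhat)
    (hB_sc : SimplyConnectedSpace Bhat)
    (hB_bd : (0 : ℂ) ∈ frontier Bhat)
    (α : ℝ) (hα : 0 < α)
    (Ψ : ℂ → ℂ)
    -- `Ψ` is a homeomorphism of `closure Δ⁺` onto `closure B̂`:
    (hΨ_bij : Set.BijOn Ψ (closure upperHalfDisc) (closure Bhat))
    (hΨ_inv_cont : ContinuousOn (Function.invFunOn Ψ (closure upperHalfDisc))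
      (closure Bhat))
    -- `Ψ` is Hölder continuous of exponent `α`:
    (c : ℝ) (hc : 0 < c)
    (hΨ_holder : ∀ x ∈ closure upperHalfDisc, ∀ y ∈ closure upperHalfDisc,
      dist (Ψ x) (Ψ y) ≤ c * dist x y ^ α)
    -- `Ψ` restricts to a biholomorphism of `Δ⁺` onto `B̂`:
    (hΨ_hol : DifferentiableOn ℂ Ψ upperHalfDisc)
    (hΨ_bij' : Set.BijOn Ψ upperHalfDisc Bhat)
    (hΨ_zero : Ψ 0 = 0)
    -- the cone condition on `B̂`:
    (hconeB : ∀ p ∈ Bhat, |(F p).im| ≤ K * |(F p).re|) :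
    ∀ z ∈ upperHalfDisc, F z = 0 := by
  have hUopen := isOpen_upperHalfDisc
  have hUpre := isPreconnected_upperHalfDisc
  set G : ℂ → ℂ := fun z => F (Ψ z) with hGdef
  have hmapsΔ : ∀ z ∈ upperHalfDisc, Ψ z ∈ Bhat := fun z hz => hΨ_bij'.mapsTo hz
  have hG_diff : DifferentiableOn ℂ G upperHalfDisc :=
    hF_hol.comp hΨ_hol fun z hz => hB_sub (hmapsΔ z hz)
  have hG_cone : ∀ z ∈ upperHalfDisc, |(G z).im| ≤ K * |(G z).re| :=
    fun z hz => hconeB _ (hmapsΔ z hz)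
  have hBne : Bhat.Nonempty := by
    rcases Set.eq_empty_or_nonempty Bhat with h | h
    · rw [h] at hB_bd
      simp [frontier_empty] at hB_bd
    · exact h
  -- reduce to showing `G ≡ 0`
  have hFzero_of_G : (∀ w ∈ upperHalfDisc, G w = 0) → ∀ z ∈ upperHalfDisc, F z = 0 := by
    intro hG0
    obtain ⟨p, hp⟩ := hBne
    have hFB : ∀ q ∈ Bhat, F q = 0 := by
      intro q hq
      obtain ⟨w, hw, rfl⟩ := hΨ_bij'.surjOn hq
      exact hG0 w hw
    have hev : F =ᶠ[nhds p] 0 :=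
      Filter.eventuallyEq_iff_exists_mem.2 ⟨Bhat, hB_open.mem_nhds hp, fun q hq => hFB q hq⟩
    exact fun z hz => (hF_hol.analyticOnNhd hUopen).eqOn_zero_of_preconnected_of_eventuallyEq_zero
      hUpre (hB_sub hp) hev hz
  -- quadratic decay of `G` at `0`
  have h0cl : (0 : ℂ) ∈ closure upperHalfDisc :=
    closure_mono hB_sub (frontier_subset_closure hB_bd)
  have hΨabs : ∀ z ∈ closure upperHalfDisc, ‖Ψ z‖ ≤ c * ‖z‖ ^ α := by
    intro z hzc
    have h := hΨ_holder z hzc 0 h0cl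
    rw [hΨ_zero] at h
    simpa [dist_zero_right] using h
  set k : ℕ := ⌈2 / α⌉₊ with hkdef
  have hk2 : 2 ≤ α * k := by
    have h1 : (2 / α : ℝ) ≤ k := Nat.le_ceil _
    calc (2:ℝ) = α * (2 / α) := by field_simp
    _ ≤ α * k := mul_le_mul_of_nonneg_left h1 hα.le
  obtain ⟨Ck, hCk, δ, hδ, hFk⟩ := hvanish k
  set ρ' : ℝ := (δ / (2 * c)) ^ (1 / α : ℝ) with hρ'def
  have hρ'pos : 0 < ρ' := Real.rpow_pos_of_pos (by positivity) _
  set ρ : ℝ := min 1 ρ' with hρdef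
  have hρpos : 0 < ρ := lt_min one_pos hρ'pos
  have hρ1 : ρ ≤ 1 := min_le_left _ _
  have hGb : ∀ z ∈ upperHalfDisc, ‖z‖ < ρ →
      ‖G z‖ ≤ Ck * c ^ k * ‖z‖ ^ 2 := by
    intro z hzU hzρ
    set t := ‖z‖ with htdef
    have ht0 : 0 < t := norm_pos_iff.2 (ne_zero_of_mem_upperHalfDisc hzU)
    have ht1 : t < 1 := lt_of_lt_of_le hzρ hρ1
    have hΨz : ‖Ψ z‖ ≤ c * t ^ α := hΨabs z (subset_closure hzU)
    have hρα : t ^ α ≤ δ / (2 * c) := by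
      have htρ' : t ≤ ρ' := le_of_lt (lt_of_lt_of_le hzρ (min_le_right _ _))
      calc t ^ α ≤ ρ' ^ α := Real.rpow_le_rpow ht0.le htρ' hα.le
      _ = δ / (2 * c) := by
          rw [hρ'def, ← Real.rpow_mul (by positivity), one_div, inv_mul_cancel₀ hα.ne',
            Real.rpow_one]
    have hΨδ : ‖Ψ z‖ < δ := by
      calc ‖Ψ z‖ ≤ c * (δ / (2 * c)) :=
            le_trans hΨz (mul_le_mul_of_nonneg_left hρα hc.le)
      _ = δ / 2 := by field_simp
      _ < δ := by linarith
    have hmem : Ψ z ∈ upperHalfDisc := hB_sub (hmapsΔ z hzU)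
    have h3 : ‖F (Ψ z)‖ ≤ Ck * ‖Ψ z‖ ^ k := hFk _ hmem hΨδ
    have h4 : ‖Ψ z‖ ^ k ≤ (c * t ^ α) ^ k :=
      pow_le_pow_left₀ (norm_nonneg _) hΨz k
    have h5 : (c * t ^ α) ^ k = c ^ k * t ^ (α * (k : ℝ)) := by
      rw [mul_pow, ← Real.rpow_natCast (t ^ α) k, ← Real.rpow_mul ht0.le]
    have h6 : t ^ (α * (k : ℝ)) ≤ t ^ (2 : ℝ) :=
      Real.rpow_le_rpow_of_exponent_ge ht0 ht1.le hk2
    have h7 : t ^ (2 : ℝ) = t ^ (2 : ℕ) := by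
      rw [← Real.rpow_natCast t 2]
      norm_num
    calc ‖G z‖ = ‖F (Ψ z)‖ := rfl
    _ ≤ Ck * ‖Ψ z‖ ^ k := h3
    _ ≤ Ck * (c ^ k * t ^ (α * (k : ℝ))) := by
        rw [← h5]; exact mul_le_mul_of_nonneg_left h4 hCk.le
    _ ≤ Ck * (c ^ k * t ^ (2 : ℝ)) := by
        refine mul_le_mul_of_nonneg_left (mul_le_mul_of_nonneg_left h6 (by positivity)) hCk.le
    _ = Ck * c ^ k * t ^ 2 := by rw [h7]; ring
  have hA : 0 < Ck * c ^ k := by positivity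
  by_cases hzero : ∃ z0 ∈ upperHalfDisc, G z0 = 0
  · obtain ⟨z0, hz0U, hz00⟩ := hzero
    have han : AnalyticAt ℂ G z0 := (hG_diff.analyticOnNhd hUopen) z0 hz0U
    rcases han.eventually_constant_or_nhds_le_map_nhds with hconst | hopen
    · have hev : G =ᶠ[nhds z0] 0 := hconst.mono fun w hw => by rw [hw, hz00]; rfl
      have heq := (hG_diff.analyticOnNhd hUopen).eqOn_zero_of_preconnected_of_eventuallyEq_zero
        hUpre hz0U hev
      exact hFzero_of_G fun w hw => heq hw
    · exfalso
      have hS : {w : ℂ | |w.im| ≤ K * |w.re|} ∈ Filter.map G (nhds z0) := by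
        rw [Filter.mem_map]
        exact Filter.mem_of_superset (hUopen.mem_nhds hz0U) fun w hw => hG_cone w hw
      have hS0 : {w : ℂ | |w.im| ≤ K * |w.re|} ∈ nhds (0 : ℂ) := by
        rw [← hz00]
        exact hopen hS
      obtain ⟨ε, hε, hball⟩ := Metric.mem_nhds_iff.1 hS0
      have hmem : (Complex.I * ((ε / 2 : ℝ) : ℂ)) ∈ Metric.ball (0 : ℂ) ε := by
        rw [Metric.mem_ball, dist_zero_right]
        simp only [norm_mul, Complex.norm_I, Complex.norm_real, Real.norm_eq_abs, one_mul]
        rw [abs_of_pos (by linarith)]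
        linarith
      have hin := hball hmem
      simp only [Set.mem_setOf_eq, Complex.mul_im, Complex.mul_re, Complex.I_re, Complex.I_im,
        Complex.ofReal_re, Complex.ofReal_im, zero_mul, one_mul, mul_zero, sub_zero, mul_one,
        zero_sub, add_zero, zero_add] at hin
      rw [abs_of_pos (by linarith : (0:ℝ) < ε / 2)] at hin
      simp only [abs_zero, mul_zero] at hin
      linarith
  · push_neg at hzero
    have hGne : ∀ z ∈ upperHalfDisc, (G z).re ≠ 0 := by
      intro z hzU h
      apply hzero z hzU
      have h1 := hG_cone z hzU
      rw [h] at h1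
      simp only [abs_zero, mul_zero] at h1
      have him : (G z).im = 0 := abs_eq_zero.1 (le_antisymm h1 (abs_nonneg _))
      exact Complex.ext (by simpa using h) (by simpa using him)
    set u := upperHalfDisc ∩ (fun z => (G z).re) ⁻¹' Set.Ioi 0 with hudef
    set v := upperHalfDisc ∩ (fun z => (G z).re) ⁻¹' Set.Iio 0 with hvdef
    have hcontre : ContinuousOn (fun z => (G z).re) upperHalfDisc :=
      Complex.continuous_re.comp_continuousOn hG_diff.continuousOn
    have hu : IsOpen u := hcontre.isOpen_inter_preimage hUopen isOpen_Ioi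
    have hv : IsOpen v := hcontre.isOpen_inter_preimage hUopen isOpen_Iio
    have hdisj : Disjoint u v := by
      rw [Set.disjoint_left]
      rintro z ⟨-, hz1⟩ ⟨-, hz2⟩
      have h1 : (0:ℝ) < (G z).re := hz1
      have h2 : (G z).re < 0 := hz2
      linarith
    have hcover : upperHalfDisc ⊆ u ∪ v := by
      intro z hzU
      rcases lt_or_gt_of_ne (hGne z hzU) with h | h
      · exact Or.inr ⟨hzU, h⟩
      · exact Or.inl ⟨hzU, h⟩
    rcases hUpre.subset_or_subset hu hv hdisj hcover with hsub | hsub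
    · exact ((auxPL K (Ck * c ^ k) ρ hK.le hA hρpos hρ1 G hG_diff
        (fun z hz => ((hsub hz).2 : (0:ℝ) < (G z).re)) hG_cone hGb)).elim
    · refine ((auxPL K (Ck * c ^ k) ρ hK.le hA hρpos hρ1 (fun z => -(G z)) hG_diff.neg
        (fun z hz => ?_) (fun z hz => ?_) (fun z hz hρz => ?_)).elim)
      · have h2 : (G z).re < 0 := (hsub hz).2
        simpa using neg_pos.2 h2
      · simpa using hG_cone z hz
      · simpa using hGb z hz hρz
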